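/- Let ψ : M(n+1,k,ℝ) → 𝕊 be a polynomial (or real analytic) function with E_iψ = 0 for all i = 1,…,k, where E_i = Σ_{α=1}^{n+1} ε_α·∂_{x_{αi}}. If ψ vanishes identically on the subspace {x_{n+1,1} = … = x_{n+1,k} = 0}, then ψ = 0. In other words, a monogenic function is uniquely determined by its restriction to M(n,k,ℝ). -/

import Mathlib

open MvPolynomial

/-- `E_i = Σ_α ε_α · ∂_{x_{αi}}` acting on `𝕊`-valued polynomials on `M(n+1,k,ℝ)`,
where `𝕊 = ℂ^m` and the `ε_α` act via matrices. -/
noncomputable def Epol {n k m : ℕ} (ε : Fin (n + 1) → Matrix (Fin m) (Fin m) ℂ) (i : Fin k)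
    (ψ : Fin m → MvPolynomial (Fin (n + 1) × Fin k) ℂ) :
    Fin m → MvPolynomial (Fin (n + 1) × Fin k) ℂ :=
  fun u => ∑ α : Fin (n + 1), ∑ v : Fin m, C (ε α u v) * pderiv (α, i) (ψ v)

-- coeff of pderiv
lemma coeff_pderiv' {σ : Type*} [DecidableEq σ] (w : σ) (p : MvPolynomial σ ℂ) (e : σ →₀ ℕ) :
    coeff e (pderiv w p) = ((e w : ℂ) + 1) * coeff (e + Finsupp.single w 1) p := by
  induction p using MvPolynomial.induction_on' with
  | add p q hp hq => simp [hp, hq, mul_add]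
  | monomial s a =>
    rw [pderiv_monomial, coeff_monomial, coeff_monomial]
    by_cases h : s = e + Finsupp.single w 1
    · subst h
      have h1 : e + Finsupp.single w 1 - Finsupp.single w 1 = e := by
        ext j; simp [Finsupp.single_apply]
      rw [if_pos h1, if_pos rfl]
      have h2 : (e + Finsupp.single w 1 : σ →₀ ℕ) w = e w + 1 := by simp
      rw [h2]; push_cast; ring
    · rw [if_neg h, mul_zero]
      split_ifs with h2
      · have hw : s w = 0 := by
          by_contra hw
          apply h
          ext j
          have hj := congrArg (fun f => f j) h2
          simp only [Finsupp.coe_tsub, Pi.sub_apply] at hj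
          by_cases hjw : j = w
          · subst hjw; simp [Finsupp.single_apply] at hj ⊢; omega
          · simp [Finsupp.single_apply, Ne.symm hjw] at hj ⊢; omega
        simp [hw]
      · rfl

lemma pderiv_comm' {σ : Type*} [DecidableEq σ] (w w' : σ) (p : MvPolynomial σ ℂ) :
    pderiv w (pderiv w' p) = pderiv w' (pderiv w p) := by
  apply MvPolynomial.ext
  intro e
  rw [coeff_pderiv', coeff_pderiv', coeff_pderiv', coeff_pderiv']
  rw [add_right_comm e (Finsupp.single w' 1) (Finsupp.single w 1)]
  by_cases h : w = w'
  · subst h; ring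
  · have h1 : (e + Finsupp.single w' 1 : σ →₀ ℕ) w = e w := by
      simp [Finsupp.single_apply, Ne.symm h]
    have h2 : (e + Finsupp.single w 1 : σ →₀ ℕ) w' = e w' := by
      simp [Finsupp.single_apply, h]
    rw [h1, h2]; ring

lemma support_avoid {σ : Type*} [DecidableEq σ] (P : σ → Prop) [DecidablePred P]
    (p : MvPolynomial σ ℂ) (hp : ∀ d ∈ p.support, ∀ v, P v → d v = 0) :
    bind₁ (fun v => if P v then 0 else X v) p = p := by
  have key : ∀ d ∈ p.support, bind₁ (fun v => if P v then 0 else X v) (monomial d (coeff d p))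
      = monomial d (coeff d p) := by
    intro d hd
    rw [bind₁_monomial, monomial_eq]
    congr 1
    apply Finsupp.prod_congr
    intro v hv
    have : ¬ P v := by
      intro hPv
      have := hp d hd v hPv
      simp [Finsupp.mem_support_iff] at hv
      exact hv this
    simp [this]
  conv_lhs => rw [← support_sum_monomial_coeff p]
  rw [map_sum, Finset.sum_congr rfl key, support_sum_monomial_coeff]

lemma pderiv_zero_coeff {σ : Type*} [DecidableEq σ] (w : σ) (p : MvPolynomial σ ℂ)
    (h : pderiv w p = 0) (d : σ →₀ ℕ) (hd : d w ≠ 0) : coeff d p = 0 := by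
  have he : (d - Finsupp.single w 1) + Finsupp.single w 1 = d := by
    ext j
    by_cases hj : j = w
    · subst hj; simp [Finsupp.single_apply]; omega
    · simp [Finsupp.single_apply, Ne.symm hj]
  have := coeff_pderiv' w p (d - Finsupp.single w 1)
  rw [h, he] at this
  simp only [coeff_zero] at this
  have hne : (((d - Finsupp.single w 1 : σ →₀ ℕ) w : ℂ) + 1) ≠ 0 := by
    have := Nat.cast_add_one_ne_zero (R := ℂ) ((d - Finsupp.single w 1 : σ →₀ ℕ) w)
    exact_mod_cast this
  exact (mul_eq_zero.mp this.symm).resolve_left hne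

lemma totalDegree_pderiv_le {σ : Type*} [DecidableEq σ] (w : σ) (p : MvPolynomial σ ℂ) (N : ℕ)
    (h : p.totalDegree ≤ N + 1) : (pderiv w p).totalDegree ≤ N := by
  apply Finset.sup_le
  intro d hd
  have hc : coeff d (pderiv w p) ≠ 0 := by rwa [MvPolynomial.mem_support_iff] at hd
  rw [coeff_pderiv'] at hc
  have hc2 : coeff (d + Finsupp.single w 1) p ≠ 0 := by
    intro h0; rw [h0, mul_zero] at hc; exact hc rfl
  have := le_totalDegree (p := p) (MvPolynomial.mem_support_iff.mpr hc2)
  have hsum : (d + Finsupp.single w 1).sum (fun _ e => e) = d.sum (fun _ e => e) + 1 := by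
    rw [Finsupp.sum_add_index (by simp) (by simp)]
    simp
  omega

lemma eval_real_zero {V : Type*} (p : MvPolynomial V ℂ)
    (h : ∀ q : V → ℝ, eval (fun v => (q v : ℂ)) p = 0) : p = 0 := by
  set p₁ : MvPolynomial V ℝ := AddMonoidAlgebra.ofCoeff (Finsupp.mapRange Complex.re Complex.zero_re (AddMonoidAlgebra.coeff p)) with hp₁
  set p₂ : MvPolynomial V ℝ := AddMonoidAlgebra.ofCoeff (Finsupp.mapRange Complex.im Complex.zero_im (AddMonoidAlgebra.coeff p)) with hp₂
  have hc1 : ∀ d, coeff d p₁ = (coeff d p).re := fun d => rfl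
  have hc2 : ∀ d, coeff d p₂ = (coeff d p).im := fun d => rfl
  have hdec : p = map Complex.ofRealHom p₁ + C Complex.I * map Complex.ofRealHom p₂ := by
    apply MvPolynomial.ext
    intro d
    rw [coeff_add, coeff_map, coeff_C_mul, coeff_map, hc1, hc2]
    simp only [Complex.ofRealHom_eq_coe]
    rw [mul_comm]
    exact (Complex.re_add_im _).symm
  have e0 : ∀ (r : MvPolynomial V ℝ) (q : V → ℝ),
      eval (fun v => (q v : ℂ)) (map Complex.ofRealHom r) = ((eval q r : ℝ) : ℂ) := by
    intro r q
    rw [eval_map]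
    have := eval₂_comp_left Complex.ofRealHom (RingHom.id ℝ) q r
    simp only [RingHomCompTriple.comp_eq, Complex.ofRealHom_eq_coe] at this ⊢
    exact this.symm
  have heval : ∀ q : V → ℝ, ((eval q p₁ : ℝ) : ℂ) + Complex.I * ((eval q p₂ : ℝ) : ℂ) = 0 := by
    intro q
    have hq := h q
    rw [hdec, map_add, map_mul, eval_C, e0, e0] at hq
    exact hq
  have h1 : p₁ = 0 := by
    apply MvPolynomial.funext
    intro x
    have := congrArg Complex.re (heval x)
    simpa using this
  have h2 : p₂ = 0 := by
    apply MvPolynomial.funext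
    intro x
    have := congrArg Complex.im (heval x)
    simpa using this
  rw [hdec, h1, h2]
  simp

lemma pderiv_bind₁_comm {σ : Type*} [DecidableEq σ] (P : σ → Prop) [DecidablePred P]
    (w : σ) (hw : ¬ P w) (p : MvPolynomial σ ℂ) :
    pderiv w (bind₁ (fun v => if P v then 0 else X v) p)
      = bind₁ (fun v => if P v then 0 else X v) (pderiv w p) := by
  induction p using MvPolynomial.induction_on with
  | C a => simp [bind₁_C_right]
  | add p q hp hq => simp [map_add, hp, hq]
  | mul_X p v hp =>
    rw [map_mul, bind₁_X_right, pderiv_mul, pderiv_mul, map_add, map_mul, map_mul,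
      bind₁_X_right, hp]
    by_cases hv : P v
    · have hwv : v ≠ w := fun h => hw (h ▸ hv)
      simp [hv, pderiv_X_of_ne hwv]
    · simp only [hv, if_false]
      by_cases hwv : w = v
      · subst hwv; simp [pderiv_X_self]
      · simp [pderiv_X_of_ne (Ne.symm hwv)]

lemma matrix_cancel {m : ℕ} {V : Type*} (M : Matrix (Fin m) (Fin m) ℂ)
    (hM : M * M = -1) (x : Fin m → MvPolynomial V ℂ)
    (h : ∀ u, ∑ v, C (M u v) * x v = 0) (w : Fin m) : x w = 0 := by
  have h0 : ∑ u, C (M w u) * (∑ v, C (M u v) * x v) = 0 := by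
    simp [h]
  have h1 : ∑ u, C (M w u) * (∑ v, C (M u v) * x v)
      = ∑ v, C ((M * M) w v) * x v := by
    simp_rw [Finset.mul_sum]
    rw [Finset.sum_comm]
    apply Finset.sum_congr rfl
    intro v _
    rw [Matrix.mul_apply, map_sum, Finset.sum_mul]
    apply Finset.sum_congr rfl
    intro u _
    rw [map_mul]; ring
  have h2 : ∑ v, C ((M * M) w v) * x v = - x w := by
    rw [hM]
    have hterm : ∀ v : Fin m, C ((-1 : Matrix (Fin m) (Fin m) ℂ) w v) * x v
        = if v = w then - x v else 0 := by
      intro v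
      by_cases hv : w = v
      · subst hv; simp [Matrix.one_apply]
      · simp [Matrix.neg_apply, Matrix.one_apply, hv, Ne.symm hv]
    rw [Finset.sum_congr rfl (fun v _ => hterm v), Finset.sum_ite_eq' Finset.univ w]
    simp
  rw [h1, h2] at h0
  exact neg_eq_zero.mp h0

lemma final_step {n k : ℕ} (p : MvPolynomial (Fin (n + 1) × Fin k) ℂ)
    (hB : bind₁ (fun v : Fin (n + 1) × Fin k => if v.1 = Fin.last n then 0 else X v) p = 0)
    (hD : ∀ i : Fin k, pderiv (Fin.last n, i) p = 0) : p = 0 := by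
  have hs : ∀ d ∈ p.support, ∀ v : Fin (n + 1) × Fin k, v.1 = Fin.last n → d v = 0 := by
    intro d hd v hv
    by_contra h0
    have hv2 : v = (Fin.last n, v.2) := Prod.ext hv rfl
    have : coeff d p = 0 := by
      apply pderiv_zero_coeff (Fin.last n, v.2) p (hD v.2) d
      rwa [← hv2]
    exact (MvPolynomial.mem_support_iff.mp hd) this
  have := support_avoid (fun v : Fin (n + 1) × Fin k => v.1 = Fin.last n) p hs
  rw [this] at hB
  exact hB

lemma key_induction {n k m : ℕ} (ε : Fin (n + 1) → Matrix (Fin m) (Fin m) ℂ)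
    (hM : ε (Fin.last n) * ε (Fin.last n) = -1) :
    ∀ N : ℕ, ∀ ψ : Fin m → MvPolynomial (Fin (n + 1) × Fin k) ℂ,
      (∀ i, Epol ε i ψ = 0) →
      (∀ u, bind₁ (fun v : Fin (n + 1) × Fin k => if v.1 = Fin.last n then 0 else X v) (ψ u) = 0) →
      (∀ u, (ψ u).totalDegree ≤ N) → ∀ u, ψ u = 0 := by
  intro N
  induction N with
  | zero =>
    intro ψ hE hB hdeg u
    have hD : ∀ i : Fin k, pderiv (Fin.last n, i) (ψ u) = 0 := by
      intro i
      apply MvPolynomial.ext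
      intro e
      rw [coeff_pderiv', coeff_zero]
      have hc : coeff (e + Finsupp.single (Fin.last n, i) 1) (ψ u) = 0 := by
        apply coeff_eq_zero_of_totalDegree_lt
        set d := e + Finsupp.single (Fin.last n, i) 1 with hd
        have hw : d (Fin.last n, i) ≠ 0 := by simp [hd]
        have hmem : (Fin.last n, i) ∈ d.support := Finsupp.mem_support_iff.mpr hw
        have h1 : d (Fin.last n, i) ≤ ∑ j ∈ d.support, d j :=
          Finset.single_le_sum (fun _ _ => Nat.zero_le _) hmem
        have h2 : (ψ u).totalDegree = 0 := Nat.le_zero.mp (hdeg u)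
        omega
      rw [hc, mul_zero]
    exact final_step (ψ u) (hB u) hD
  | succ N ih =>
    intro ψ hE hB hdeg u
    have hD : ∀ i : Fin k, ∀ u', pderiv (Fin.last n, i) (ψ u') = 0 := by
      intro i
      apply ih (fun u' => pderiv (Fin.last n, i) (ψ u'))
      · -- Epol commutes with pderiv
        intro j
        funext u'
        simp only [Epol, Pi.zero_apply]
        have heq : pderiv (Fin.last n, i) ((Epol ε j ψ) u')
            = ∑ α : Fin (n + 1), ∑ v : Fin m,
              C (ε α u' v) * pderiv (α, j) (pderiv (Fin.last n, i) (ψ v)) := by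
          simp only [Epol, map_sum]
          apply Finset.sum_congr rfl; intro α _
          apply Finset.sum_congr rfl; intro v _
          rw [pderiv_C_mul, pderiv_comm']
        rw [← heq, hE j]
        simp
      · -- bind₁ condition via matrix_cancel
        intro u'
        have hcancel : ∀ w : Fin m, ∑ v : Fin m, C (ε (Fin.last n) w v) *
            (bind₁ (fun v : Fin (n + 1) × Fin k => if v.1 = Fin.last n then 0 else X v))
              (pderiv (Fin.last n, i) (ψ v)) = 0 := by
          intro w
          have h0 := congrFun (hE i) w
          simp only [Epol, Pi.zero_apply] at h0
          have h1 := congrArg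
            (bind₁ (fun v : Fin (n + 1) × Fin k => if v.1 = Fin.last n then 0 else X v)) h0
          rw [map_sum, map_zero, Fin.sum_univ_castSucc] at h1
          have h2 : ∀ α : Fin n,
              (bind₁ (fun v : Fin (n + 1) × Fin k => if v.1 = Fin.last n then 0 else X v))
                (∑ v : Fin m, C (ε α.castSucc w v) * pderiv (α.castSucc, i) (ψ v)) = 0 := by
            intro α
            rw [map_sum]
            apply Finset.sum_eq_zero
            intro v _
            rw [map_mul, bind₁_C_right,
              ← pderiv_bind₁_comm (fun v : Fin (n + 1) × Fin k => v.1 = Fin.last n)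
              (α.castSucc, i) (by simpa using (Fin.castSucc_lt_last α).ne) (ψ v), hB v]
            simp
          rw [Finset.sum_eq_zero (fun α _ => h2 α), zero_add, map_sum] at h1
          refine Eq.trans ?_ h1
          apply Finset.sum_congr rfl
          intro v _
          rw [map_mul, bind₁_C_right]
        exact matrix_cancel (ε (Fin.last n)) hM _ hcancel u'
      · intro u'
        exact totalDegree_pderiv_le _ _ N (hdeg u')
    exact final_step (ψ u) (hB u) (fun i => hD i u)

/-- A (polynomial) monogenic function vanishing on the subspace
`{x_{n+1,1} = … = x_{n+1,k} = 0}` is identically zero: a monogenic function is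
uniquely determined by its restriction to `M(n,k,ℝ)`. -/
theorem monogenic_determined_by_restriction {n k m : ℕ} (hk : 2 ≤ k) (hn : 2 ≤ n)
    (ε : Fin (n + 1) → Matrix (Fin m) (Fin m) ℂ)
    (hcl : ∀ α β, ε α * ε β + ε β * ε α =
      if α = β then (-2 : ℂ) • (1 : Matrix (Fin m) (Fin m) ℂ) else 0)
    (ψ : Fin m → MvPolynomial (Fin (n + 1) × Fin k) ℂ)
    (hE : ∀ i : Fin k, Epol ε i ψ = 0)
    (hres : ∀ q : (Fin (n + 1) × Fin k) → ℝ, (∀ i : Fin k, q (Fin.last n, i) = 0) →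
      ∀ u : Fin m, eval (fun v => (q v : ℂ)) (ψ u) = 0) :
    ψ = 0 := by

  have hM : ε (Fin.last n) * ε (Fin.last n) = -1 := by
    have h := hcl (Fin.last n) (Fin.last n)
    rw [if_pos rfl] at h
    have h2 : (2 : ℂ) • (ε (Fin.last n) * ε (Fin.last n))
        = (-2 : ℂ) • (1 : Matrix (Fin m) (Fin m) ℂ) := by
      rw [two_smul]; exact h
    have h3 : ε (Fin.last n) * ε (Fin.last n)
        = ((2 : ℂ)⁻¹ * 2) • (ε (Fin.last n) * ε (Fin.last n)) := by norm_num
    rw [h3, mul_smul, h2, smul_smul]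
    norm_num
  have hB : ∀ u, bind₁ (fun v : Fin (n + 1) × Fin k =>
      if v.1 = Fin.last n then 0 else X v) (ψ u) = 0 := by
    intro u
    apply eval_real_zero
    intro q
    have hq0 : ∀ i : Fin k,
        (fun v : Fin (n + 1) × Fin k => if v.1 = Fin.last n then 0 else q v) (Fin.last n, i) = 0 := by
      intro i; simp
    have hr := hres (fun v : Fin (n + 1) × Fin k => if v.1 = Fin.last n then 0 else q v) hq0 u
    rw [← hr]
    rw [show eval (fun v => ((q v : ℝ) : ℂ))
        ((bind₁ (fun v : Fin (n + 1) × Fin k => if v.1 = Fin.last n then 0 else X v)) (ψ u))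
      = aeval (fun v => ((q v : ℝ) : ℂ))
        ((bind₁ (fun v : Fin (n + 1) × Fin k => if v.1 = Fin.last n then 0 else X v)) (ψ u)) from rfl]
    rw [aeval_bind₁]
    rw [show ∀ f : (Fin (n + 1) × Fin k) → ℂ, aeval f (ψ u) = eval f (ψ u) from fun f => rfl]
    have hfun : (fun i : Fin (n + 1) × Fin k =>
        (aeval fun v : Fin (n + 1) × Fin k => ((q v : ℝ) : ℂ))
          (if i.1 = Fin.last n then 0 else X i : MvPolynomial (Fin (n + 1) × Fin k) ℂ))
        = fun v : Fin (n + 1) × Fin k =>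
            (((if v.1 = Fin.last n then 0 else q v : ℝ)) : ℂ) := by
      funext v
      by_cases hv : v.1 = Fin.last n <;> simp [hv]
    rw [hfun]
  funext u
  exact key_induction ε hM (Finset.univ.sup fun u' => (ψ u').totalDegree) ψ hE hB
    (fun u' => Finset.le_sup (f := fun u'' => (ψ u'').totalDegree) (Finset.mem_univ u')) u
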